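/- (Theorem 2, zero selling threshold without a later off-peak period) Suppose the time-of-use schedule consists of an initial off-peak period followed by an on-peak period extending to the end of the horizon (no off-peak period after the on-peak period). Then for every on-peak time t < T−1 the selling threshold vanishes: −π_t⁻ ∈ h_{t+1}(0), i.e., one may take δ_t = 0, so that in the net production zone the optimal EV charging is v* = min{v̄, y_t}. -/

import Mathlib

open MeasureTheory Set

/-- NEM X payment for net consumption `z` with buy price `pp` and sell price `pm`. -/
noncomputable def NEMPayment (pp pm z : ℝ) : ℝ := pp * max z 0 - pm * max (-z) 0

/-- The superdifferential of a function `f : ℝ → ℝ` (viewed as a concave function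
on `[0, ∞)`) at a point `y`. -/
def superdiff (f : ℝ → ℝ) (y : ℝ) : Set ℝ :=
  {s | ∀ z, 0 ≤ z → f z ≤ f y + s * (z - y)}

/-- Data of the EV-charging / flexible-consumption dynamic program over horizon
`{0, …, T-1}` with `K` flexible loads, under NEM time-of-use prices. -/
structure EVModel (K T : ℕ) (Ω : Type) [MeasurableSpace Ω] where
  /-- underlying probability measure -/
  μ : Measure Ω
  prob : IsProbabilityMeasure μ
  /-- consumption upper bounds -/
  dbar : Fin K → ℝ
  dbar_pos : ∀ i, 0 < dbar i
  /-- device utility functions -/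
  U : Fin K → ℝ → ℝ
  U_strictConcave : ∀ i, StrictConcaveOn ℝ (Icc 0 (dbar i)) (U i)
  U_strictMono : ∀ i, StrictMonoOn (U i) (Icc 0 (dbar i))
  U_diff : ∀ i, ∀ x ∈ Icc 0 (dbar i), DifferentiableWithinAt ℝ (U i) (Icc 0 (dbar i)) x
  U_contDeriv : ∀ i, ContinuousOn (fun x => derivWithin (U i) (Icc 0 (dbar i)) x) (Icc 0 (dbar i))
  U_zero : ∀ i, U i 0 = 0
  /-- renewable processes -/
  r : ℕ → Ω → ℝ
  r_meas : ∀ t, Measurable (r t)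
  r_nonneg : ∀ t ω, 0 ≤ r t ω
  r_int : ∀ t, Integrable (r t) μ
  r_indep : ProbabilityTheory.iIndepFun r μ
  /-- time-of-use buy prices `π_t⁺` -/
  pip : ℕ → ℝ
  /-- time-of-use sell prices `π_t⁻` -/
  pim : ℕ → ℝ
  /-- maximal per-period EV charge -/
  vbar : ℝ
  vbar_pos : 0 < vbar
  /-- per-unit penalty for unmet EV demand at the horizon -/
  γ : ℝ
  /-- `π_off⁻ = min_t π_t⁻` -/
  pioff : ℝ
  pioff_le : ∀ t < T, pioff ≤ pim t
  pioff_attained : ∃ t < T, pioff = pim t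
  /-- assumption A1 -/
  A1 : ∀ t < T, 0 < pim t ∧ pim t ≤ pip t ∧ pip t < γ

namespace EVModel

variable {K T : ℕ} {Ω : Type} [MeasurableSpace Ω]

/-- Stage reward `g_t(x_t, v, d)`. -/
noncomputable def stage (M : EVModel K T Ω) (t : ℕ) (rt v : ℝ) (d : Fin K → ℝ) : ℝ :=
  ∑ i, M.U i (d i) - NEMPayment (M.pip t) (M.pim t) (v + ∑ i, d i - rt)

/-- Feasible decisions `(v, d)` given remaining demand `y`. -/
def feas (M : EVModel K T Ω) (y : ℝ) : Set (ℝ × (Fin K → ℝ)) :=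
  {p | p.1 ∈ Icc 0 (min M.vbar y) ∧ ∀ i, p.2 i ∈ Icc 0 (M.dbar i)}

/-- Value function indexed by `k = T - 1 - t`, the number of remaining periods after
the current one. -/
noncomputable def W (M : EVModel K T Ω) : ℕ → ℝ → ℝ → ℝ
  | 0 => fun y rt => sSup ((fun p : ℝ × (Fin K → ℝ) =>
      M.stage (T - 1) rt p.1 p.2 - M.γ * (y - p.1)) '' M.feas y)
  | (k + 1) => fun y rt => sSup ((fun p : ℝ × (Fin K → ℝ) =>
      M.stage (T - 2 - k) rt p.1 p.2 +
        ∫ ω, M.W k (y - p.1) (M.r (T - 1 - k) ω) ∂M.μ) '' M.feas y)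

/-- Value function `V_t(y, r_t)` (the price argument is determined by `t`). -/
noncomputable def V (M : EVModel K T Ω) (t : ℕ) (y rt : ℝ) : ℝ := M.W (T - 1 - t) y rt

/-- Expected value function `V̄_t(y) = E[V_t(y, r_t, π_t)]`. -/
noncomputable def Vbar (M : EVModel K T Ω) (t : ℕ) (y : ℝ) : ℝ := ∫ ω, M.V t y (M.r t ω) ∂M.μ

/-- Objective of the Bellman equation at time `t` in state `(y, rt)`. -/
noncomputable def bellObj (M : EVModel K T Ω) (t : ℕ) (y rt : ℝ) (p : ℝ × (Fin K → ℝ)) : ℝ :=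
  if t = T - 1 then M.stage t rt p.1 p.2 - M.γ * (y - p.1)
  else M.stage t rt p.1 p.2 + ∫ ω, M.V (t + 1) (y - p.1) (M.r (t + 1) ω) ∂M.μ

/-- `(v, d)` is an optimal solution of the Bellman equation at time `t`. -/
def IsBellmanOpt (M : EVModel K T Ω) (t : ℕ) (y rt : ℝ) (p : ℝ × (Fin K → ℝ)) : Prop :=
  p ∈ M.feas y ∧ ∀ q ∈ M.feas y, M.bellObj t y rt q ≤ M.bellObj t y rt p

/-- Superdifferential `h_t` of the concave expected value function `V̄_t`. -/
noncomputable def h (M : EVModel K T Ω) (t : ℕ) (y : ℝ) : Set ℝ := superdiff (M.Vbar t) y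

end EVModel

lemma nem_eq (pp pm z : ℝ) : NEMPayment pp pm z = pm * z + (pp - pm) * max z 0 := by
  unfold NEMPayment
  rcases le_total z 0 with h | h
  · rw [max_eq_right h, max_eq_left (neg_nonneg.2 h)]; ring
  · rw [max_eq_left h, max_eq_right (neg_nonpos.2 h)]; ring

lemma nem_diff (pp pm a b : ℝ) (hpm : 0 ≤ pm) (hpp : pm ≤ pp) (hab : b ≤ a) :
    pm * (a - b) ≤ NEMPayment pp pm a - NEMPayment pp pm b := by
  rw [nem_eq, nem_eq]
  have h1 : max b 0 ≤ max a 0 := max_le_max hab le_rfl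
  nlinarith [mul_nonneg (sub_nonneg.2 hpp) (sub_nonneg.2 h1)]

namespace EVModel

variable {K T : ℕ} {Ω : Type} [MeasurableSpace Ω] (M : EVModel K T Ω)

/-- Objective function mirroring the definition of `W`. -/
noncomputable def obj : ℕ → ℝ → ℝ → ℝ × (Fin K → ℝ) → ℝ
  | 0 => fun y rt p => M.stage (T - 1) rt p.1 p.2 - M.γ * (y - p.1)
  | (k + 1) => fun y rt p => M.stage (T - 2 - k) rt p.1 p.2 +
      ∫ ω, M.W k (y - p.1) (M.r (T - 1 - k) ω) ∂M.μ

lemma W_eq (k : ℕ) (y rt : ℝ) : M.W k y rt = sSup (M.obj k y rt '' M.feas y) := by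
  cases k <;> rfl

lemma gamma_pos (hT : 0 < T) : 0 < M.γ := by
  obtain ⟨h1, h2, h3⟩ := M.A1 0 hT
  linarith

lemma feas_nonempty {y : ℝ} (hy : 0 ≤ y) : (M.feas y).Nonempty :=
  ⟨(0, fun _ => 0), ⟨le_rfl, le_min M.vbar_pos.le hy⟩,
    fun i => ⟨le_rfl, (M.dbar_pos i).le⟩⟩

lemma feas_v_le {y : ℝ} {p : ℝ × (Fin K → ℝ)} (hp : p ∈ M.feas y) : p.1 ≤ y :=
  hp.1.2.trans (min_le_right _ _)

lemma feas_y_nonneg {y : ℝ} {p : ℝ × (Fin K → ℝ)} (hp : p ∈ M.feas y) : 0 ≤ y :=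
  hp.1.1.trans (M.feas_v_le hp)

lemma stage_le {y : ℝ} (t : ℕ) (ht : t < T) (rt : ℝ) {p : ℝ × (Fin K → ℝ)}
    (hp : p ∈ M.feas y) :
    M.stage t rt p.1 p.2 ≤ (∑ i, M.U i (M.dbar i)) + M.γ * max rt 0 := by
  obtain ⟨h1, h2, h3⟩ := M.A1 t ht
  have hU : ∑ i, M.U i (p.2 i) ≤ ∑ i, M.U i (M.dbar i) :=
    Finset.sum_le_sum fun i _ =>
      ((M.U_strictMono i).monotoneOn) ⟨(hp.2 i).1, (hp.2 i).2⟩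
        ⟨(M.dbar_pos i).le, le_rfl⟩ (hp.2 i).2
  have hd : 0 ≤ ∑ i, p.2 i := Finset.sum_nonneg fun i _ => (hp.2 i).1
  set w := p.1 + ∑ i, p.2 i - rt with hw
  have h4 : 0 ≤ M.pip t * max w 0 := mul_nonneg (by linarith) (le_max_right _ _)
  have h5 : max (-w) 0 ≤ max rt 0 :=
    max_le_max (by have := hp.1.1; simp only [hw]; linarith) le_rfl
  have h6 : M.pim t * max (-w) 0 ≤ M.γ * max rt 0 :=
    mul_le_mul (by linarith) h5 (le_max_right _ _) (by linarith)
  unfold stage NEMPayment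
  rw [← hw]
  linarith

lemma stage_zero_ge (t : ℕ) (ht : t < T) {rt : ℝ} (hrt : 0 ≤ rt) :
    0 ≤ M.stage t rt 0 (fun _ => 0) := by
  obtain ⟨h1, h2, h3⟩ := M.A1 t ht
  unfold stage NEMPayment
  simp [M.U_zero, max_eq_right (neg_nonpos.2 hrt), max_eq_left hrt]
  positivity

lemma stage_mono (t : ℕ) (ht : t < T) (v : ℝ) (d : Fin K → ℝ) :
    Monotone (fun rt => M.stage t rt v d) := by
  obtain ⟨h1, h2, h3⟩ := M.A1 t ht
  intro a b hab
  simp only [stage]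
  have hmono := nem_diff (M.pip t) (M.pim t) (v + ∑ i, d i - a) (v + ∑ i, d i - b)
    h1.le h2 (by linarith)
  nlinarith [mul_nonneg h1.le (sub_nonneg.2 hab)]

lemma stage_diff (t : ℕ) (ht : t < T) {v v' : ℝ} (hv : v' ≤ v) (d : Fin K → ℝ) (rt : ℝ) :
    M.stage t rt v d ≤ M.stage t rt v' d - M.pim t * (v - v') := by
  obtain ⟨h1, h2, h3⟩ := M.A1 t ht
  have := nem_diff (M.pip t) (M.pim t) (v + ∑ i, d i - rt) (v' + ∑ i, d i - rt)
    h1.le h2 (by linarith)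
  simp only [stage]
  have e : v + ∑ i, d i - rt - (v' + ∑ i, d i - rt) = v - v' := by ring
  rw [e] at this
  linarith

end EVModel
namespace EVModel

variable {K T : ℕ} {Ω : Type} [MeasurableSpace Ω] (M : EVModel K T Ω)

lemma feas_empty {y : ℝ} (hy : y < 0) : M.feas y = ∅ := by
  ext p
  simp only [feas, mem_setOf_eq, mem_empty_iff_false, iff_false, not_and]
  intro hv
  intro _
  have := hv.1.trans (hv.2.trans (min_le_right M.vbar y))
  linarith

/-- upper bound on elements gives upper bound and bddAbove for W. -/
lemma W_le_of {k : ℕ} {C : ℝ} (hC0 : 0 ≤ C) (hγ : 0 ≤ M.γ)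
    (hC : ∀ y rt, ∀ p ∈ M.feas y, M.obj k y rt p ≤ C + M.γ * max rt 0) :
    ∀ y rt, M.W k y rt ≤ C + M.γ * max rt 0 := by
  intro y rt
  rw [W_eq]
  exact Real.sSup_le (by rintro x ⟨p, hp, rfl⟩; exact hC y rt p hp)
    (add_nonneg hC0 (mul_nonneg hγ (le_max_right _ _)))

lemma bddAbove_of {k : ℕ} {C : ℝ}
    (hC : ∀ y rt, ∀ p ∈ M.feas y, M.obj k y rt p ≤ C + M.γ * max rt 0) (y rt : ℝ) :
    BddAbove (M.obj k y rt '' M.feas y) :=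
  ⟨C + M.γ * max rt 0, by rintro x ⟨p, hp, rfl⟩; exact hC y rt p hp⟩

lemma integrable_comp {k : ℕ} {C : ℝ} (hC0 : 0 ≤ C) (hγ : 0 ≤ M.γ)
    (hmono : ∀ y, Monotone (M.W k y))
    (hupper : ∀ y rt, M.W k y rt ≤ C + M.γ * max rt 0)
    (hlower : ∀ y, 0 ≤ y → ∀ rt, 0 ≤ rt → -(M.γ * y) ≤ M.W k y rt)
    {y : ℝ} (hy : 0 ≤ y) (s : ℕ) :
    Integrable (fun ω => M.W k y (M.r s ω)) M.μ := by
  haveI := M.prob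
  have hm : Measurable fun ω => M.W k y (M.r s ω) :=
    (hmono y).measurable.comp (M.r_meas s)
  refine Integrable.mono' (g := fun ω => (C + M.γ * y) + M.γ * M.r s ω)
    ((integrable_const _).add ((M.r_int s).const_mul M.γ))
    hm.aestronglyMeasurable (Filter.Eventually.of_forall fun ω => ?_)
  have hr := M.r_nonneg s ω
  have h1 := hupper y (M.r s ω)
  rw [max_eq_left hr] at h1
  have h2 := hlower y hy (M.r s ω) hr
  have h3 : 0 ≤ M.γ * M.r s ω := mul_nonneg hγ hr
  have h4 : 0 ≤ M.γ * y := mul_nonneg hγ hy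
  rw [Real.norm_eq_abs, abs_le]
  constructor <;> · linarith

lemma integral_comp_le {k : ℕ} {C : ℝ} (hC0 : 0 ≤ C) (hγ : 0 ≤ M.γ)
    (hmono : ∀ y, Monotone (M.W k y))
    (hupper : ∀ y rt, M.W k y rt ≤ C + M.γ * max rt 0)
    (hlower : ∀ y, 0 ≤ y → ∀ rt, 0 ≤ rt → -(M.γ * y) ≤ M.W k y rt)
    {y : ℝ} (hy : 0 ≤ y) (s : ℕ) :
    ∫ ω, M.W k y (M.r s ω) ∂M.μ ≤ C + M.γ * ∫ ω, M.r s ω ∂M.μ := by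
  haveI := M.prob
  have hg : Integrable (fun ω => C + M.γ * M.r s ω) M.μ :=
    (integrable_const C).add ((M.r_int s).const_mul M.γ)
  have h := integral_mono (M.integrable_comp hC0 hγ hmono hupper hlower hy s) hg
    (fun ω => by
      have hr := M.r_nonneg s ω
      have h1 := hupper y (M.r s ω)
      rw [max_eq_left hr] at h1
      simpa using h1)
  rwa [integral_add (integrable_const C) ((M.r_int s).const_mul M.γ),
    integral_const, integral_const_mul, probReal_univ, one_smul] at h

lemma integral_comp_ge {k : ℕ} {C : ℝ} (hC0 : 0 ≤ C) (hγ : 0 ≤ M.γ)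
    (hmono : ∀ y, Monotone (M.W k y))
    (hupper : ∀ y rt, M.W k y rt ≤ C + M.γ * max rt 0)
    (hlower : ∀ y, 0 ≤ y → ∀ rt, 0 ≤ rt → -(M.γ * y) ≤ M.W k y rt)
    {y : ℝ} (hy : 0 ≤ y) (s : ℕ) :
    -(M.γ * y) ≤ ∫ ω, M.W k y (M.r s ω) ∂M.μ := by
  haveI := M.prob
  have h := integral_mono (integrable_const (-(M.γ * y)))
    (M.integrable_comp hC0 hγ hmono hupper hlower hy s)
    (fun ω => hlower y hy (M.r s ω) (M.r_nonneg s ω))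
  rwa [integral_const, probReal_univ, one_smul] at h

/-- The main boundedness / monotonicity / lower bound package. -/
lemma main (hT : 0 < T) : ∀ k : ℕ,
    (∃ C, 0 ≤ C ∧ ∀ y rt, ∀ p ∈ M.feas y, M.obj k y rt p ≤ C + M.γ * max rt 0)
    ∧ (∀ y, Monotone (M.W k y))
    ∧ (∀ y, 0 ≤ y → ∀ rt, 0 ≤ rt → -(M.γ * y) ≤ M.W k y rt) := by
  have hγ : 0 ≤ M.γ := (M.gamma_pos hT).le
  have hT1 : T - 1 < T := by omega
  intro k
  induction k with
  | zero =>
    have hC : ∀ y rt, ∀ p ∈ M.feas y,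
        M.obj 0 y rt p ≤ (∑ i, M.U i (M.dbar i)) + M.γ * max rt 0 := by
      intro y rt p hp
      have h1 := M.stage_le (T - 1) hT1 rt hp
      have h2 : p.1 ≤ y := M.feas_v_le hp
      have h3 : 0 ≤ M.γ * (y - p.1) := mul_nonneg hγ (by linarith)
      simp only [obj]
      linarith
    have hUb : 0 ≤ ∑ i, M.U i (M.dbar i) := Finset.sum_nonneg fun i _ => by
      have := (M.U_strictMono i) (left_mem_Icc.2 (M.dbar_pos i).le)
        (right_mem_Icc.2 (M.dbar_pos i).le) (M.dbar_pos i)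
      rw [M.U_zero i] at this
      linarith
    refine ⟨⟨_, hUb, hC⟩, ?_, ?_⟩
    · -- monotone in rt
      intro y
      rcases lt_or_ge y 0 with hy | hy
      · intro a b _
        simp [W_eq, M.feas_empty hy, Real.sSup_empty]
      · intro a b hab
        rw [W_eq, W_eq]
        refine csSup_le ((M.feas_nonempty hy).image _) ?_
        rintro x ⟨p, hp, rfl⟩
        refine le_trans ?_ (le_csSup (M.bddAbove_of hC y b) ⟨p, hp, rfl⟩)
        have h := M.stage_mono (T - 1) hT1 p.1 p.2 hab
        simp only [obj]
        dsimp only at h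
        linarith
    · -- lower bound
      intro y hy rt hrt
      rw [W_eq]
      have hmem : ((0 : ℝ), fun _ => (0 : ℝ)) ∈ M.feas y :=
        ⟨⟨le_rfl, le_min M.vbar_pos.le hy⟩, fun i => ⟨le_rfl, (M.dbar_pos i).le⟩⟩
      refine le_trans ?_ (le_csSup (M.bddAbove_of hC y rt)
        ⟨((0 : ℝ), fun _ => (0 : ℝ)), hmem, rfl⟩)
      have := M.stage_zero_ge (T - 1) hT1 hrt
      simp only [obj]
      simp only [sub_zero]
      linarith
  | succ k ih =>
    obtain ⟨⟨C, hC0, hC⟩, hmono, hlower⟩ := ih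
    have hupper := M.W_le_of hC0 hγ hC
    have hT2 : T - 2 - k < T := by omega
    set Er := ∫ ω, M.r (T - 1 - k) ω ∂M.μ with hEr
    have hEr0 : 0 ≤ Er := integral_nonneg fun ω => M.r_nonneg _ ω
    set C' := (∑ i, M.U i (M.dbar i)) + C + M.γ * Er with hC'
    have hUb : 0 ≤ ∑ i, M.U i (M.dbar i) := Finset.sum_nonneg fun i _ => by
      have := (M.U_strictMono i) (left_mem_Icc.2 (M.dbar_pos i).le)
        (right_mem_Icc.2 (M.dbar_pos i).le) (M.dbar_pos i)
      rw [M.U_zero i] at this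
      linarith
    have hC'0 : 0 ≤ C' := by positivity
    have hCnew : ∀ y rt, ∀ p ∈ M.feas y,
        M.obj (k + 1) y rt p ≤ C' + M.γ * max rt 0 := by
      intro y rt p hp
      have h1 := M.stage_le (T - 2 - k) hT2 rt hp
      have hyv : 0 ≤ y - p.1 := sub_nonneg.2 (M.feas_v_le hp)
      have h2 := M.integral_comp_le hC0 hγ hmono hupper hlower hyv (T - 1 - k)
      simp only [obj]
      rw [hC']
      linarith
    refine ⟨⟨C', hC'0, hCnew⟩, ?_, ?_⟩
    · intro y
      rcases lt_or_ge y 0 with hy | hy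
      · intro a b _
        simp [W_eq, M.feas_empty hy, Real.sSup_empty]
      · intro a b hab
        rw [W_eq, W_eq]
        refine csSup_le ((M.feas_nonempty hy).image _) ?_
        rintro x ⟨p, hp, rfl⟩
        refine le_trans ?_ (le_csSup (M.bddAbove_of hCnew y b) ⟨p, hp, rfl⟩)
        have h := M.stage_mono (T - 2 - k) hT2 p.1 p.2 hab
        simp only [obj]
        dsimp only at h
        linarith
    · intro y hy rt hrt
      rw [W_eq]
      have hmem : ((0 : ℝ), fun _ => (0 : ℝ)) ∈ M.feas y :=
        ⟨⟨le_rfl, le_min M.vbar_pos.le hy⟩, fun i => ⟨le_rfl, (M.dbar_pos i).le⟩⟩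
      refine le_trans ?_ (le_csSup (M.bddAbove_of hCnew y rt)
        ⟨((0 : ℝ), fun _ => (0 : ℝ)), hmem, rfl⟩)
      have h1 := M.stage_zero_ge (T - 2 - k) hT2 hrt
      have h2 := M.integral_comp_ge hC0 hγ hmono hupper hlower
        (y := y - 0) (by linarith) (T - 1 - k)
      simp only [obj, sub_zero] at h2 ⊢
      linarith

end EVModel
namespace EVModel

variable {K T : ℕ} {Ω : Type} [MeasurableSpace Ω] (M : EVModel K T Ω)

lemma feas_proj {y z : ℝ} (hy : 0 ≤ y) (hz : 0 ≤ z) {p : ℝ × (Fin K → ℝ)} (hp : p ∈ M.feas (y + z)) :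
    (min p.1 y, p.2) ∈ M.feas y ∧ min p.1 y ≤ p.1 ∧ p.1 - min p.1 y ≤ z ∧ min p.1 y ≤ y := by
  have hv0 := hp.1.1
  have hvb : p.1 ≤ M.vbar := hp.1.2.trans (min_le_left _ _)
  have hvyz : p.1 ≤ y + z := M.feas_v_le hp
  refine ⟨⟨⟨le_min hv0 hy, le_min ((min_le_left _ _).trans hvb) (min_le_right _ _)⟩, hp.2⟩,
    min_le_left _ _, ?_, min_le_right _ _⟩
  rcases le_total p.1 y with h | h
  · rw [min_eq_left h]; linarith
  · rw [min_eq_right h]; linarith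

lemma contraction (hT : 0 < T) (c : ℝ) (hc0 : 0 ≤ c) (hcγ : c ≤ M.γ) :
    ∀ k : ℕ, (∀ j ≤ k, c ≤ M.pim (T - 1 - j)) → ∀ y z rt, 0 ≤ y → 0 ≤ z →
      M.W k (y + z) rt ≤ M.W k y rt - c * z := by
  have hT1 : T - 1 < T := by omega
  intro k
  induction k with
  | zero =>
    intro hyp y z rt hy hz
    obtain ⟨C, hC0, hC⟩ := (M.main hT 0).1
    rw [W_eq, W_eq]
    refine csSup_le ((M.feas_nonempty (by linarith)).image _) ?_
    rintro x ⟨p, hp, rfl⟩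
    obtain ⟨hq, h1, h2, h3⟩ := M.feas_proj hy hz hp
    set v' := min p.1 y with hv'
    have hpm : c ≤ M.pim (T - 1) := by simpa using hyp 0 (Nat.zero_le 0)
    have hs := M.stage_diff (T - 1) hT1 h1 p.2 rt
    have key : M.obj 0 (y + z) rt p ≤ M.obj 0 y rt (v', p.2) - c * z := by
      simp only [obj]
      have m1 : c * (p.1 - v') ≤ M.pim (T - 1) * (p.1 - v') :=
        mul_le_mul_of_nonneg_right hpm (by linarith)
      have m2 : c * (z - (p.1 - v')) ≤ M.γ * (z - (p.1 - v')) :=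
        mul_le_mul_of_nonneg_right hcγ (by linarith)
      nlinarith [hs]
    refine key.trans ?_
    have := le_csSup (M.bddAbove_of hC y rt) ⟨(v', p.2), hq, rfl⟩
    linarith
  | succ k ih =>
    intro hyp y z rt hy hz
    haveI := M.prob
    have hγ : 0 ≤ M.γ := (M.gamma_pos hT).le
    have hT2 : T - 2 - k < T := by omega
    obtain ⟨⟨C, hC0, hC⟩, hmono, hlower⟩ := M.main hT k
    have hupper := M.W_le_of hC0 hγ hC
    obtain ⟨C', hC'0, hC'⟩ := (M.main hT (k + 1)).1
    rw [W_eq, W_eq]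
    refine csSup_le ((M.feas_nonempty (by linarith)).image _) ?_
    rintro x ⟨p, hp, rfl⟩
    obtain ⟨hq, h1, h2, h3⟩ := M.feas_proj hy hz hp
    set v' := min p.1 y with hv'
    have hpm : c ≤ M.pim (T - 2 - k) := by
      have := hyp (k + 1) le_rfl
      have e : T - 1 - (k + 1) = T - 2 - k := by omega
      rwa [e] at this
    have hs := M.stage_diff (T - 2 - k) hT2 h1 p.2 rt
    -- continuation term
    set w := z - (p.1 - v') with hwdef
    have hw0 : 0 ≤ w := by simp only [hwdef]; linarith
    have hyv' : 0 ≤ y - v' := by linarith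
    have e : y + z - p.1 = (y - v') + w := by simp only [hwdef]; ring
    have hpoint : ∀ ω, M.W k ((y - v') + w) (M.r (T - 1 - k) ω) ≤
        M.W k (y - v') (M.r (T - 1 - k) ω) - c * w := fun ω =>
      ih (fun j hj => hyp j (by omega)) (y - v') w _ hyv' hw0
    have int2 : Integrable (fun ω => M.W k (y - v') (M.r (T - 1 - k) ω)) M.μ :=
      M.integrable_comp hC0 hγ hmono hupper hlower hyv' _
    have int1 : Integrable (fun ω => M.W k ((y - v') + w) (M.r (T - 1 - k) ω)) M.μ :=
      M.integrable_comp hC0 hγ hmono hupper hlower (by linarith) _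
    have hint : ∫ ω, M.W k ((y - v') + w) (M.r (T - 1 - k) ω) ∂M.μ ≤
        (∫ ω, M.W k (y - v') (M.r (T - 1 - k) ω) ∂M.μ) - c * w := by
      have hg2 : Integrable (fun ω => M.W k (y - v') (M.r (T - 1 - k) ω) - c * w) M.μ :=
        int2.sub (integrable_const _)
      have h := integral_mono int1 hg2 (fun ω => hpoint ω)
      rwa [integral_sub int2 (integrable_const _), integral_const, probReal_univ,
        one_smul] at h
    have key : M.obj (k + 1) (y + z) rt p ≤ M.obj (k + 1) y rt (v', p.2) - c * z := by
      simp only [obj]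
      rw [e] at *
      have m1 : c * (p.1 - v') ≤ M.pim (T - 2 - k) * (p.1 - v') :=
        mul_le_mul_of_nonneg_right hpm (by linarith)
      have : c * z = c * (p.1 - v') + c * w := by simp only [hwdef]; ring
      rw [e]
      linarith
    refine key.trans ?_
    have := le_csSup (M.bddAbove_of hC' y rt) ⟨(v', p.2), hq, rfl⟩
    linarith

end EVModel
/-- **Theorem 2 (zero selling threshold without a later off-peak period).**
Suppose the TOU schedule is an initial off-peak period `{0, …, t₀-1}` followed by an
on-peak period `{t₀, …, T-1}` extending to the end of the horizon.  Then for every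
on-peak time `t < T - 1` the selling threshold vanishes: `-π_t⁻ ∈ h_{t+1}(0)`, i.e.
one may take `δ_t = 0`, so that in the net production zone the optimal EV charging is
`v* = min {v̄, y_t}`. -/
theorem thm2_zero_selling_threshold (K T : ℕ) (Ω : Type) [MeasurableSpace Ω]
    (M : EVModel K T Ω)
    (t₀ : ℕ) (ht₀ : t₀ < T)
    (πoffp πoffm πonp πonm : ℝ)
    (hoff : ∀ s < t₀, M.pip s = πoffp ∧ M.pim s = πoffm)
    (hon : ∀ s, t₀ ≤ s → s < T → M.pip s = πonp ∧ M.pim s = πonm)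
    (hpp : πoffp ≤ πonp) (hpm : πoffm ≤ πonm)
    (t : ℕ) (hton : t₀ ≤ t) (ht : t < T - 1) :
    -M.pim t ∈ M.h (t + 1) 0 := by
  have hT : 0 < T := by omega
  haveI := M.prob
  have ht' : t < T := by omega
  obtain ⟨hpim_pos, hpim_le, hlt⟩ := M.A1 t ht'
  simp only [EVModel.h, superdiff, mem_setOf_eq]
  intro z hz
  set k := T - 1 - (t + 1) with hk
  have hyp : ∀ j ≤ k, M.pim t ≤ M.pim (T - 1 - j) := by
    intro j hj
    have hs1 : t₀ ≤ T - 1 - j := by omega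
    have hs2 : T - 1 - j < T := by omega
    rw [(hon _ hs1 hs2).2, ← (hon t hton ht').2]
  have hcγ : M.pim t ≤ M.γ := by linarith
  have hcon := M.contraction hT (M.pim t) hpim_pos.le hcγ k hyp 0 z
  obtain ⟨⟨C, hC0, hC⟩, hmono, hlower⟩ := M.main hT k
  have hγ : 0 ≤ M.γ := (M.gamma_pos hT).le
  have hupper := M.W_le_of hC0 hγ hC
  have int1 : Integrable (fun ω => M.W k z (M.r (t + 1) ω)) M.μ :=
    M.integrable_comp hC0 hγ hmono hupper hlower hz _
  have int2 : Integrable (fun ω => M.W k 0 (M.r (t + 1) ω)) M.μ :=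
    M.integrable_comp hC0 hγ hmono hupper hlower le_rfl _
  have hg2 : Integrable (fun ω => M.W k 0 (M.r (t + 1) ω) - M.pim t * z) M.μ :=
    int2.sub (integrable_const _)
  have hpt : ∀ ω, M.W k z (M.r (t + 1) ω) ≤ M.W k 0 (M.r (t + 1) ω) - M.pim t * z := by
    intro ω
    have := hcon (M.r (t + 1) ω) le_rfl hz
    rwa [zero_add] at this
  have hmain := integral_mono int1 hg2 hpt
  rw [integral_sub int2 (integrable_const _), integral_const, probReal_univ,
    one_smul] at hmain
  simp only [EVModel.Vbar, EVModel.V, ← hk]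
  linarith
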